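/- The map Φ: O_n → ℝ^n sending O to the diagonal of O D_λ O^t is continuous, and the pushforward of the Haar probability measure on O_n under Φ is a probability measure supported on the permutahedron PH_λ, invariant under the action of S_n permuting coordinates. -/

import Mathlib

open Matrix Finset MeasureTheory

/-- Borel measurable structure on real matrices (the product σ-algebra). -/
noncomputable instance (n m : ℕ) : MeasurableSpace (Matrix (Fin n) (Fin m) ℝ) := by
  exact MeasurableSpace.pi

instance (n m : ℕ) : BorelSpace (Matrix (Fin n) (Fin m) ℝ) := Pi.borelSpace

/-- Easy direction of Schur–Horn: the diagonal of `O D_λ Oᵀ` for orthogonal `O`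
lies in the permutahedron of `λ`. -/
lemma diag_mem_permutahedron (n : ℕ) (lam : Fin n → ℝ) (O : Matrix (Fin n) (Fin n) ℝ)
    (hO : O ∈ Matrix.orthogonalGroup (Fin n) ℝ) :
    (fun i => (O * Matrix.diagonal lam * Oᵀ) i i) ∈ convexHull ℝ
      {y : Fin n → ℝ | ∃ σ : Equiv.Perm (Fin n), y = lam ∘ σ} := by
  set M : Matrix (Fin n) (Fin n) ℝ := fun i j => O i j ^ 2 with hMdef
  have hrow : ∀ i, ∑ j, O i j * O i j = 1 := by
    intro i
    have h := (Matrix.mem_orthogonalGroup_iff (Fin n) ℝ).1 hO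
    have := congrFun (congrFun h i) i
    simpa [Matrix.mul_apply, Matrix.star_eq_conjTranspose, Matrix.one_apply] using this
  have hcol : ∀ j, ∑ i, O i j * O i j = 1 := by
    intro j
    have h := (Matrix.mem_orthogonalGroup_iff' (Fin n) ℝ).1 hO
    have := congrFun (congrFun h j) j
    simpa [Matrix.mul_apply, Matrix.star_eq_conjTranspose, Matrix.one_apply] using this
  have hM : M ∈ doublyStochastic ℝ (Fin n) := by
    rw [mem_doublyStochastic_iff_sum]
    refine ⟨fun i j => sq_nonneg _, fun i => ?_, fun j => ?_⟩
    · simpa [hMdef, sq] using hrow i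
    · simpa [hMdef, sq] using hcol j
  have hPhi : (fun i => (O * Matrix.diagonal lam * Oᵀ) i i) = M *ᵥ lam := by
    funext i
    simp [Matrix.mul_apply, Matrix.mulVec, dotProduct, hMdef, Matrix.diagonal,
      Finset.sum_ite_eq, sq]
    ring_nf
  rw [hPhi]
  let f : Matrix (Fin n) (Fin n) ℝ →ₗ[ℝ] (Fin n → ℝ) :=
    { toFun := fun A => A *ᵥ lam
      map_add' := fun A B => Matrix.add_mulVec A B lam
      map_smul' := fun c A => by simp [Matrix.smul_mulVec] }
  have hM' : M ∈ convexHull ℝ {σ.permMatrix ℝ | σ : Equiv.Perm (Fin n)} := by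
    rw [← doublyStochastic_eq_convexHull_permMatrix]; exact hM
  have h1 : f M ∈ f '' (convexHull ℝ {σ.permMatrix ℝ | σ : Equiv.Perm (Fin n)}) :=
    Set.mem_image_of_mem f hM'
  rw [f.image_convexHull] at h1
  refine convexHull_mono ?_ h1
  rintro x ⟨A, ⟨σ, rfl⟩, rfl⟩
  refine ⟨σ, ?_⟩
  funext i
  simp [f, Matrix.mulVec, dotProduct, Equiv.Perm.permMatrix, PEquiv.toMatrix,
    Equiv.toPEquiv_apply]

/-- Conjugating by a permutation matrix permutes the diagonal entries. -/
lemma diag_perm_conj (n : ℕ) (lam : Fin n → ℝ) (σ : Equiv.Perm (Fin n))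
    (O : Matrix (Fin n) (Fin n) ℝ) :
    (fun i => ((σ.permMatrix ℝ * O) * Matrix.diagonal lam * (σ.permMatrix ℝ * O)ᵀ) i i)
    = (fun i => (O * Matrix.diagonal lam * Oᵀ) i i) ∘ σ := by
  funext i
  have h : (σ.permMatrix ℝ * O) * Matrix.diagonal lam * (σ.permMatrix ℝ * O)ᵀ
      = σ.permMatrix ℝ * (O * Matrix.diagonal lam * Oᵀ) * (σ.permMatrix ℝ)ᵀ := by
    simp [Matrix.transpose_mul, Matrix.mul_assoc]
  rw [h]
  set A := O * Matrix.diagonal lam * Oᵀ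
  simp only [Function.comp_apply]
  have h2 : σ.permMatrix ℝ * A = A.submatrix σ id := PEquiv.toMatrix_toPEquiv_mul σ A
  rw [h2]
  have h3 : (σ.permMatrix ℝ)ᵀ = (σ⁻¹).permMatrix ℝ := by
    ext a b
    have hiff : σ b = a ↔ σ⁻¹ a = b := by
      rw [Equiv.Perm.inv_def, Equiv.symm_apply_eq, eq_comm]
    simp only [Matrix.transpose_apply, Equiv.Perm.permMatrix, PEquiv.toMatrix,
      Equiv.toPEquiv_apply, Option.mem_def, Option.some.injEq, Matrix.of_apply]
    split_ifs with h1 h2 h2 <;> first | rfl | (exfalso; tauto)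
  rw [h3]
  rw [PEquiv.mul_toMatrix_toPEquiv (A.submatrix σ id) (σ⁻¹)]
  simp [Equiv.Perm.inv_def]

/-- Permutation matrices are orthogonal. -/
lemma permMatrix_mem_orthogonal (n : ℕ) (σ : Equiv.Perm (Fin n)) :
    σ.permMatrix ℝ ∈ Matrix.orthogonalGroup (Fin n) ℝ := by
  rw [Matrix.mem_orthogonalGroup_iff]
  ext i j
  simp [Matrix.mul_apply, Matrix.star_eq_conjTranspose, Equiv.Perm.permMatrix,
    PEquiv.toMatrix, Equiv.toPEquiv_apply, Matrix.one_apply, Finset.sum_ite_eq,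
    eq_comm (a := i)]

/-- The map `Φ : O ↦ diag(O D_λ Oᵀ)` is continuous; the pushforward of the Haar
probability measure of `O_n` under `Φ` is a probability measure, supported on
the permutahedron `PH_λ` (the convex hull of the `S_n`-orbit of `λ`), and
invariant under the `S_n`-action permuting coordinates. -/
theorem pushforward_diag_measure (n : ℕ) (lam : Fin n → ℝ)
    (μ : Measure (Matrix (Fin n) (Fin n) ℝ)) [IsProbabilityMeasure μ]
    (hsupp : μ {O | O ∉ Matrix.orthogonalGroup (Fin n) ℝ} = 0)
    (hinv : ∀ P ∈ Matrix.orthogonalGroup (Fin n) ℝ,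
      μ.map (fun O => P * O) = μ) :
    Continuous (fun O : Matrix (Fin n) (Fin n) ℝ =>
      (fun i => (O * Matrix.diagonal lam * Oᵀ) i i)) ∧
    IsProbabilityMeasure
      (μ.map (fun O : Matrix (Fin n) (Fin n) ℝ =>
        (fun i => (O * Matrix.diagonal lam * Oᵀ) i i))) ∧
    (μ.map (fun O : Matrix (Fin n) (Fin n) ℝ =>
        (fun i => (O * Matrix.diagonal lam * Oᵀ) i i)))
      {x : Fin n → ℝ | x ∉ convexHull ℝ
        {y : Fin n → ℝ | ∃ σ : Equiv.Perm (Fin n), y = lam ∘ σ}} = 0 ∧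
    ∀ σ : Equiv.Perm (Fin n),
      (μ.map (fun O : Matrix (Fin n) (Fin n) ℝ =>
          (fun i => (O * Matrix.diagonal lam * Oᵀ) i i))).map
        (fun x : Fin n → ℝ => x ∘ σ) =
      μ.map (fun O : Matrix (Fin n) (Fin n) ℝ =>
        (fun i => (O * Matrix.diagonal lam * Oᵀ) i i)) := by
  set Φ : Matrix (Fin n) (Fin n) ℝ → (Fin n → ℝ) :=
    fun O => (fun i => (O * Matrix.diagonal lam * Oᵀ) i i) with hΦdef
  have hc : Continuous Φ := by
    apply continuous_pi; intro i
    simp only [hΦdef, mul_apply, transpose_apply]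
    fun_prop
  have hΦm : Measurable Φ := hc.measurable
  refine ⟨hc, Measure.isProbabilityMeasure_map hΦm.aemeasurable, ?_, ?_⟩
  · -- support
    have hfin : ({y : Fin n → ℝ | ∃ σ : Equiv.Perm (Fin n), y = lam ∘ σ}).Finite := by
      have : {y : Fin n → ℝ | ∃ σ : Equiv.Perm (Fin n), y = lam ∘ σ}
          = Set.range (fun σ : Equiv.Perm (Fin n) => lam ∘ σ) := by
        ext y; simp [eq_comm, Set.range]
      rw [this]; exact Set.finite_range _
    have hK : IsClosed (convexHull ℝ {y : Fin n → ℝ | ∃ σ : Equiv.Perm (Fin n), y = lam ∘ σ}) :=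
      (hfin.isCompact_convexHull ℝ).isClosed
    have hS : MeasurableSet {x : Fin n → ℝ | x ∉ convexHull ℝ
        {y : Fin n → ℝ | ∃ σ : Equiv.Perm (Fin n), y = lam ∘ σ}} :=
      hK.measurableSet.compl
    rw [Measure.map_apply hΦm hS]
    refine measure_mono_null ?_ hsupp
    intro O hO
    simp only [Set.mem_preimage, Set.mem_setOf_eq] at hO ⊢
    intro hOmem
    exact hO (diag_mem_permutahedron n lam O hOmem)
  · -- invariance
    intro σ
    have hPmem := permMatrix_mem_orthogonal n σ
    have hcompm : Measurable (fun x : Fin n → ℝ => x ∘ σ) :=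
      measurable_pi_lambda _ (fun i => measurable_pi_apply _)
    have hmulc : Continuous (fun O : Matrix (Fin n) (Fin n) ℝ => σ.permMatrix ℝ * O) := by
      apply continuous_pi; intro i; apply continuous_pi; intro j
      simp only [mul_apply]
      fun_prop
    have hmulm : Measurable (fun O : Matrix (Fin n) (Fin n) ℝ => σ.permMatrix ℝ * O) :=
      hmulc.measurable
    have hcomm : (fun x : Fin n → ℝ => x ∘ σ) ∘ Φ
        = Φ ∘ (fun O : Matrix (Fin n) (Fin n) ℝ => σ.permMatrix ℝ * O) := by
      funext O
      simp only [Function.comp_apply, hΦdef]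
      exact (diag_perm_conj n lam σ O).symm
    rw [Measure.map_map hcompm hΦm, hcomm, ← Measure.map_map hΦm hmulm, hinv _ hPmem]
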